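/- Let Ω be an arbitrary open set in ℝⁿ and (Ω_k^□)_{k∈ℕ} its dyadic approximations. For every point x in the boundary of Ω_k^□, the distance from x to the boundary of Ω is at most √n · 2^{-k}. -/

import Mathlib

open Set Filter Topology

noncomputable section

/-- The closed dyadic cube of order `k` indexed by `j ∈ ℤⁿ`. -/
def dyadicCube (n k : ℕ) (j : Fin n → ℤ) : Set (EuclideanSpace ℝ (Fin n)) :=
  {x | ∀ m : Fin n, (j m : ℝ) / 2 ^ k ≤ x m ∧ x m ≤ ((j m : ℝ) + 1) / 2 ^ k}

/-- A set is drawn on the dyadic grid `Π_k` if it is a union of cubes of that grid. -/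
def DrawnOn (n k : ℕ) (Q : Set (EuclideanSpace ℝ (Fin n))) : Prop :=
  ∃ 𝒬 : Set (Fin n → ℤ), Q = ⋃ j ∈ 𝒬, dyadicCube n k j

/-- `A` is the maximal set drawn on the dyadic grid of order `k`, rooted in `π₀`,
contained in `C`, with connected interior. -/
def IsMaxDyadicApprox (n k : ℕ) (π₀ C A : Set (EuclideanSpace ℝ (Fin n))) : Prop :=
  DrawnOn n k A ∧ π₀ ⊆ A ∧ A ⊆ C ∧ IsConnected (interior A) ∧
    ∀ B : Set (EuclideanSpace ℝ (Fin n)),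
      DrawnOn n k B → π₀ ⊆ B → B ⊆ C → IsConnected (interior B) → B ⊆ A

namespace Stmt2Aux

variable {n : ℕ}

/-- Open coordinate box. -/
def obox (p q : Fin n → ℝ) : Set (EuclideanSpace ℝ (Fin n)) :=
  {z | ∀ i, p i < z i ∧ z i < q i}

/-- Closed coordinate box. -/
def cbox (p q : Fin n → ℝ) : Set (EuclideanSpace ℝ (Fin n)) :=
  {z | ∀ i, p i ≤ z i ∧ z i ≤ q i}

lemma isOpen_obox (p q : Fin n → ℝ) : IsOpen (obox p q) := by
  have h : obox p q = ⋂ i, ((fun z : EuclideanSpace ℝ (Fin n) => z i) ⁻¹' Ioo (p i) (q i)) := by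
    ext z
    simp [obox, Set.mem_iInter, Set.mem_Ioo]
  rw [h]
  exact isOpen_iInter_of_finite fun i =>
    (isOpen_Ioo).preimage (EuclideanSpace.proj (𝕜 := ℝ) i).continuous

lemma convex_cbox (p q : Fin n → ℝ) : Convex ℝ (cbox p q) := by
  intro y hy z hz a b ha hb hab
  intro i
  have h1 : (a • y + b • z) i = a * y i + b * z i := rfl
  rw [h1]
  obtain ⟨hy1, hy2⟩ := hy i
  obtain ⟨hz1, hz2⟩ := hz i
  have h2 := (convex_Icc (p i) (q i)) (mem_Icc.2 ⟨hy1, hy2⟩) (mem_Icc.2 ⟨hz1, hz2⟩) ha hb hab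
  rw [mem_Icc] at h2
  simpa [smul_eq_mul] using h2

lemma cbox_subset_closure_obox (p q : Fin n → ℝ) (h : ∀ i, p i < q i) :
    cbox p q ⊆ closure (obox p q) := by
  intro y hy
  classical
  set c : EuclideanSpace ℝ (Fin n) := WithLp.toLp 2 (fun i => (p i + q i) / 2) with hc
  have key : ∀ t : ℝ, t ∈ Ioc (0:ℝ) 1 → y + t • (c - y) ∈ obox p q := by
    rintro t ⟨ht0, ht1⟩ i
    have h1 : (y + t • (c - y)) i = y i + t * (c i - y i) := rfl
    have hci : c i = (p i + q i) / 2 := rfl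
    obtain ⟨hy1, hy2⟩ := hy i
    have hpq := h i
    rw [h1, hci]
    constructor
    · nlinarith
    · nlinarith
  have hcont : Tendsto (fun t : ℝ => y + t • (c - y)) (𝓝[>] (0:ℝ)) (𝓝 y) := by
    have hc2 : Continuous (fun t : ℝ => y + t • (c - y)) := by
      exact continuous_const.add (continuous_id.smul continuous_const)
    have h0 : Tendsto (fun t : ℝ => y + t • (c - y)) (𝓝 0) (𝓝 y) := by
      have := hc2.tendsto 0
      simpa using this
    exact h0.mono_left nhdsWithin_le_nhds
  refine mem_closure_of_tendsto hcont ?_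
  filter_upwards [Ioc_mem_nhdsGT (zero_lt_one)] with t ht using key t ht

/-- Lower dyadic index of a point. -/
def lo (n k : ℕ) (y : EuclideanSpace ℝ (Fin n)) (i : Fin n) : ℤ := ⌈(2:ℝ) ^ k * y i⌉ - 1

/-- Upper dyadic index of a point. -/
def hi (n k : ℕ) (y : EuclideanSpace ℝ (Fin n)) (i : Fin n) : ℤ := ⌊(2:ℝ) ^ k * y i⌋

lemma two_pow_pos (k : ℕ) : (0:ℝ) < 2 ^ k := by positivity

lemma lo_lt (k : ℕ) (y : EuclideanSpace ℝ (Fin n)) (i : Fin n) :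
    (lo n k y i : ℝ) / 2 ^ k < y i := by
  rw [div_lt_iff₀ (two_pow_pos k)]
  have := Int.ceil_lt_add_one ((2:ℝ) ^ k * y i)
  have h2 : (lo n k y i : ℝ) = (⌈(2:ℝ) ^ k * y i⌉ : ℝ) - 1 := by
    simp [lo]
  rw [h2]
  nlinarith [this]

lemma lt_hi (k : ℕ) (y : EuclideanSpace ℝ (Fin n)) (i : Fin n) :
    y i < ((hi n k y i : ℝ) + 1) / 2 ^ k := by
  rw [lt_div_iff₀ (two_pow_pos k)]
  have := Int.lt_floor_add_one ((2:ℝ) ^ k * y i)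
  have h2 : (hi n k y i : ℝ) = (⌊(2:ℝ) ^ k * y i⌋ : ℝ) := by simp [hi]
  rw [h2]
  nlinarith [this]

lemma hi_le_lo_add_one (k : ℕ) (y : EuclideanSpace ℝ (Fin n)) (i : Fin n) :
    hi n k y i ≤ lo n k y i + 1 := by
  have := Int.floor_le_ceil ((2:ℝ) ^ k * y i)
  simp only [lo, hi]
  omega

lemma lo_le_hi (k : ℕ) (y : EuclideanSpace ℝ (Fin n)) (i : Fin n) :
    lo n k y i ≤ hi n k y i := by
  have := Int.ceil_le_floor_add_one ((2:ℝ) ^ k * y i)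
  simp only [lo, hi]
  omega

/-- `y` belongs to every dyadic cube whose index is coordinatewise `lo` or `hi`. -/
lemma mem_cube_of_lo_hi (k : ℕ) (y : EuclideanSpace ℝ (Fin n)) {j : Fin n → ℤ}
    (hj : ∀ i, j i = lo n k y i ∨ j i = hi n k y i) : y ∈ dyadicCube n k j := by
  intro i
  have hceil := Int.le_ceil ((2:ℝ) ^ k * y i)
  have hceil' := Int.ceil_lt_add_one ((2:ℝ) ^ k * y i)
  have hfl := Int.floor_le ((2:ℝ) ^ k * y i)
  have hfl' := Int.lt_floor_add_one ((2:ℝ) ^ k * y i)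
  rcases hj i with h | h <;> rw [h]
  · constructor
    · rw [div_le_iff₀ (two_pow_pos k)]
      have : (lo n k y i : ℝ) = (⌈(2:ℝ) ^ k * y i⌉ : ℝ) - 1 := by simp [lo]
      rw [this]; nlinarith
    · rw [le_div_iff₀ (two_pow_pos k)]
      have : (lo n k y i : ℝ) = (⌈(2:ℝ) ^ k * y i⌉ : ℝ) - 1 := by simp [lo]
      rw [this]; nlinarith
  · constructor
    · rw [div_le_iff₀ (two_pow_pos k)]
      have : (hi n k y i : ℝ) = (⌊(2:ℝ) ^ k * y i⌋ : ℝ) := by simp [hi]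
      rw [this]; nlinarith
    · rw [le_div_iff₀ (two_pow_pos k)]
      have : (hi n k y i : ℝ) = (⌊(2:ℝ) ^ k * y i⌋ : ℝ) := by simp [hi]
      rw [this]; nlinarith

/-- The open box around `y` determined by `lo` and `hi`. -/
def oboxAt (n k : ℕ) (y : EuclideanSpace ℝ (Fin n)) : Set (EuclideanSpace ℝ (Fin n)) :=
  obox (fun i => (lo n k y i : ℝ) / 2 ^ k) (fun i => ((hi n k y i : ℝ) + 1) / 2 ^ k)

lemma self_mem_oboxAt (k : ℕ) (y : EuclideanSpace ℝ (Fin n)) : y ∈ oboxAt n k y :=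
  fun i => ⟨lo_lt k y i, lt_hi k y i⟩

lemma isOpen_oboxAt (k : ℕ) (y : EuclideanSpace ℝ (Fin n)) : IsOpen (oboxAt n k y) :=
  isOpen_obox _ _

/-- Index pinning: a dyadic cube meeting the open box at `y` has indices `lo` or `hi`. -/
lemma index_pin {k : ℕ} {y z : EuclideanSpace ℝ (Fin n)} {j : Fin n → ℤ}
    (hz : z ∈ oboxAt n k y) (hzj : z ∈ dyadicCube n k j) :
    ∀ i, j i = lo n k y i ∨ j i = hi n k y i := by
  intro i
  obtain ⟨h1, h2⟩ := hz i
  obtain ⟨h3, h4⟩ := hzj i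
  have hle : lo n k y i ≤ j i := by
    have : (lo n k y i : ℝ) < (j i : ℝ) + 1 := by
      have := lt_of_lt_of_le h1 h4
      rw [div_lt_div_iff₀ (two_pow_pos k) (two_pow_pos k)] at this
      nlinarith [two_pow_pos k]
    have : (lo n k y i : ℝ) < ((j i + 1 : ℤ) : ℝ) := by push_cast; linarith
    exact_mod_cast Int.lt_add_one_iff.mp (by exact_mod_cast this)
  have hge : j i ≤ hi n k y i := by
    have : (j i : ℝ) < (hi n k y i : ℝ) + 1 := by
      have := lt_of_le_of_lt h3 h2
      rw [div_lt_div_iff₀ (two_pow_pos k) (two_pow_pos k)] at this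
      nlinarith [two_pow_pos k]
    have : (j i : ℝ) < ((hi n k y i + 1 : ℤ) : ℝ) := by push_cast; linarith
    exact_mod_cast Int.lt_add_one_iff.mp (by exact_mod_cast this)
  have := hi_le_lo_add_one k y i
  omega

/-- Every point lies in the dyadic cube given by its `hi` (floor) index. -/
lemma mem_cube_hi (k : ℕ) (z : EuclideanSpace ℝ (Fin n)) :
    z ∈ dyadicCube n k (hi n k z) :=
  mem_cube_of_lo_hi k z (fun i => Or.inr rfl)

/-- Any set drawn on the dyadic grid is closed. -/
lemma drawn_isClosed {k : ℕ} {S : Set (EuclideanSpace ℝ (Fin n))}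
    (h : DrawnOn n k S) : IsClosed S := by
  obtain ⟨Q, rfl⟩ := h
  refine isClosed_of_closure_subset ?_
  intro y hy
  obtain ⟨z, hz1, hz2⟩ := mem_closure_iff.1 hy _ (isOpen_oboxAt k y) (self_mem_oboxAt k y)
  simp only [mem_iUnion] at hz2
  obtain ⟨j, hjQ, hzj⟩ := hz2
  have := index_pin hz1 hzj
  have hyj : y ∈ dyadicCube n k j := mem_cube_of_lo_hi k y this
  exact mem_iUnion₂.2 ⟨j, hjQ, hyj⟩

/-- A drawn set is contained in the closure of its interior. -/
lemma drawn_subset_closure_interior {k : ℕ} {S : Set (EuclideanSpace ℝ (Fin n))}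
    (h : DrawnOn n k S) : S ⊆ closure (interior S) := by
  obtain ⟨Q, rfl⟩ := h
  intro y hy
  simp only [mem_iUnion] at hy
  obtain ⟨j, hjQ, hyj⟩ := hy
  have hsub : obox (fun i => (j i : ℝ) / 2 ^ k) (fun i => ((j i : ℝ) + 1) / 2 ^ k)
      ⊆ interior (⋃ j ∈ Q, dyadicCube n k j) := by
    refine interior_maximal ?_ (isOpen_obox _ _)
    intro z hz
    refine mem_iUnion₂.2 ⟨j, hjQ, ?_⟩
    intro i
    exact ⟨(hz i).1.le, (hz i).2.le⟩
  have hcl : dyadicCube n k j ⊆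
      closure (obox (fun i => (j i : ℝ) / 2 ^ k) (fun i => ((j i : ℝ) + 1) / 2 ^ k)) := by
    have heq : dyadicCube n k j
        = cbox (fun i => (j i : ℝ) / 2 ^ k) (fun i => ((j i : ℝ) + 1) / 2 ^ k) := rfl
    rw [heq]
    refine cbox_subset_closure_obox _ _ ?_
    intro i
    rw [div_lt_div_iff₀ (two_pow_pos k) (two_pow_pos k)]
    nlinarith [two_pow_pos k]
  exact closure_mono hsub (hcl hyj)

/-- Diameter bound: two points of the same dyadic cube are within `√n / 2^k`. -/
lemma dist_le_of_mem_cube {k : ℕ} {j : Fin n → ℤ} {x q : EuclideanSpace ℝ (Fin n)}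
    (hx : x ∈ dyadicCube n k j) (hq : q ∈ dyadicCube n k j) :
    dist x q ≤ Real.sqrt n / 2 ^ k := by
  rw [EuclideanSpace.dist_eq]
  have hbound : ∀ i, dist (x i) (q i) ^ 2 ≤ (1 / 2 ^ k) ^ 2 := by
    intro i
    obtain ⟨h1, h2⟩ := hx i
    obtain ⟨h3, h4⟩ := hq i
    have hlen : ((j i : ℝ) + 1) / 2 ^ k - (j i : ℝ) / 2 ^ k = 1 / 2 ^ k := by
      field_simp
      ring
    have habs : |x i - q i| ≤ 1 / 2 ^ k := by
      rw [abs_le]; constructor <;> nlinarith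
    have : dist (x i) (q i) ≤ 1 / 2 ^ k := by rw [Real.dist_eq]; exact habs
    nlinarith [dist_nonneg (x := x i) (y := q i)]
  have hsum : (∑ i, dist (x i) (q i) ^ 2) ≤ (n : ℝ) * (1 / 2 ^ k) ^ 2 := by
    calc (∑ i, dist (x i) (q i) ^ 2) ≤ ∑ _i : Fin n, (1 / 2 ^ k : ℝ) ^ 2 :=
          Finset.sum_le_sum fun i _ => hbound i
      _ = (n : ℝ) * (1 / 2 ^ k) ^ 2 := by simp [Finset.sum_const, mul_comm]
  calc Real.sqrt (∑ i, dist (x i) (q i) ^ 2) ≤ Real.sqrt ((n : ℝ) * (1 / 2 ^ k) ^ 2) :=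
        Real.sqrt_le_sqrt hsum
    _ = Real.sqrt n / 2 ^ k := by
        rw [Real.sqrt_mul (by positivity), Real.sqrt_sq (by positivity)]
        ring

open Set.Notation in
/-- If `x ∈ Ω` open and `dist x q < infDist x (frontier Ω)` then `q ∈ Ω`. -/
lemma mem_of_dist_lt_infDist {Ω : Set (EuclideanSpace ℝ (Fin n))} (hΩ : IsOpen Ω)
    {x q : EuclideanSpace ℝ (Fin n)} (hx : x ∈ Ω)
    (hd : dist x q < Metric.infDist x (frontier Ω)) : q ∈ Ω := by
  set s := segment ℝ x q with hs
  have hdisj : Disjoint (frontier Ω) s := by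
    rw [Set.disjoint_left]
    intro p hp hps
    have h1 : Metric.infDist x (frontier Ω) ≤ dist x p := Metric.infDist_le_dist_of_mem hp
    have h2 : dist x p + dist p q = dist x q := dist_add_dist_of_mem_segment hps
    have h3 : (0:ℝ) ≤ dist p q := dist_nonneg
    linarith
  have hpre : IsPreconnected s := (convex_segment x q).isPreconnected
  have hclopen : IsClopen (s ↓∩ Ω) := isClopen_preimage_val hΩ hdisj
  haveI := Subtype.preconnectedSpace hpre
  have hne : (s ↓∩ Ω).Nonempty := ⟨⟨x, left_mem_segment ℝ x q⟩, hx⟩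
  have huniv := hclopen.eq_univ hne
  have hq : (⟨q, right_mem_segment ℝ x q⟩ : s) ∈ s ↓∩ Ω := by
    rw [huniv]; trivial
  exact hq

end Stmt2Aux

open Stmt2Aux in
/-- Every point of the boundary of the dyadic approximation `Ω_k^□` is within
distance `√n · 2^{-k}` of the boundary of `Ω`. -/
theorem stmt2 {n : ℕ} {M : Type*} (Ω : Set (EuclideanSpace ℝ (Fin n))) (hΩ : IsOpen Ω)
    (C : M → Set (EuclideanSpace ℝ (Fin n)))
    (hcomp : ∀ m, ∃ x ∈ Ω, C m = connectedComponentIn Ω x)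
    (hcover : ∀ x ∈ Ω, ∃ m, x ∈ C m)
    (km : M → ℕ) (π : M → Fin n → ℤ)
    (hroot : ∀ m, dyadicCube n (km m) (π m) ⊆ C m)
    (A : M → ℕ → Set (EuclideanSpace ℝ (Fin n)))
    (hA : ∀ m k, km m ≤ k →
      IsMaxDyadicApprox n k (dyadicCube n (km m) (π m)) (C m) (A m k))
    (Ωsq : ℕ → Set (EuclideanSpace ℝ (Fin n)))
    (hΩsq : ∀ k, Ωsq k = interior (⋃ m, ⋃ (_ : km m ≤ k), A m k)) :
    ∀ k, ∀ x ∈ frontier (Ωsq k), Metric.infDist x (frontier Ω) ≤ Real.sqrt n / 2 ^ k := by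
  intro k x hx
  by_contra hcon
  push_neg at hcon
  -- the union of all approximations at stage k
  set S : Set (EuclideanSpace ℝ (Fin n)) := ⋃ m, ⋃ (_ : km m ≤ k), A m k with hS
  -- S is drawn on the grid, hence closed
  have hSdrawn : DrawnOn n k S := by
    have hex : ∀ m : M, ∃ Q : Set (Fin n → ℤ),
        (⋃ (_ : km m ≤ k), A m k) = ⋃ j ∈ Q, dyadicCube n k j := by
      intro m
      by_cases h : km m ≤ k
      · obtain ⟨Q, hQ⟩ := (hA m k h).1
        exact ⟨Q, by simp [h, hQ]⟩
      · exact ⟨∅, by simp [h]⟩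
    choose Q hQ using hex
    refine ⟨⋃ m, Q m, ?_⟩
    rw [hS]
    simp_rw [hQ]
    rw [Set.biUnion_iUnion]
  have hSclosed : IsClosed S := drawn_isClosed hSdrawn
  -- x lies in S
  have hxS : x ∈ S := by
    have h1 : x ∈ closure (Ωsq k) := frontier_subset_closure hx
    have h2 : Ωsq k ⊆ S := by rw [hΩsq k]; exact interior_subset
    have := closure_mono h2 h1
    rwa [hSclosed.closure_eq] at this
  simp only [hS, mem_iUnion] at hxS
  obtain ⟨m, hmk, hxA⟩ := hxS
  have hAm := hA m k hmk
  obtain ⟨hAdrawn, hAroot, hAC, hAconn, hAmax⟩ := hAm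
  -- x ∈ Ω and C m is the connected component of x
  obtain ⟨x₀, hx₀Ω, hCeq⟩ := hcomp m
  have hxC : x ∈ C m := hAC hxA
  have hxΩ : x ∈ Ω := by
    rw [hCeq] at hxC
    exact connectedComponentIn_subset Ω x₀ hxC
  have hCm : C m = connectedComponentIn Ω x := by
    rw [hCeq]
    exact connectedComponentIn_eq (by rw [← hCeq]; exact hxC)
  -- the neighborhood drawn from all cubes containing x
  set J : Set (Fin n → ℤ) := {j | ∀ i, j i = lo n k x i ∨ j i = hi n k x i} with hJ
  set N : Set (EuclideanSpace ℝ (Fin n)) := ⋃ j ∈ J, dyadicCube n k j with hN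
  -- every cube of N contains x and is inside C m
  have hcubeC : ∀ j ∈ J, dyadicCube n k j ⊆ C m := by
    intro j hj
    have hxj : x ∈ dyadicCube n k j := mem_cube_of_lo_hi k x hj
    have hsubΩ : dyadicCube n k j ⊆ Ω := by
      intro q hq
      have hdist : dist x q ≤ Real.sqrt n / 2 ^ k := dist_le_of_mem_cube hxj hq
      exact mem_of_dist_lt_infDist hΩ hxΩ (lt_of_le_of_lt hdist hcon)
    have hconv : Convex ℝ (dyadicCube n k j) := by
      have : dyadicCube n k j
          = Stmt2Aux.cbox (fun i => (j i : ℝ) / 2 ^ k) (fun i => ((j i : ℝ) + 1) / 2 ^ k) := rfl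
      rw [this]
      exact convex_cbox _ _
    have := hconv.isPreconnected.subset_connectedComponentIn hxj hsubΩ
    rwa [← hCm] at this
  have hNC : N ⊆ C m := by
    rw [hN]
    exact Set.iUnion₂_subset hcubeC
  -- the candidate drawn set B
  set B : Set (EuclideanSpace ℝ (Fin n)) := A m k ∪ N with hB
  have hBdrawn : DrawnOn n k B := by
    obtain ⟨QA, hQA⟩ := hAdrawn
    refine ⟨QA ∪ J, ?_⟩
    rw [hB, hQA, hN, Set.biUnion_union]
  have hBroot : dyadicCube n (km m) (π m) ⊆ B := fun z hz => Or.inl (hAroot hz)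
  have hBC : B ⊆ C m := Set.union_subset hAC hNC
  -- connectivity of interior B
  have hOsub : oboxAt n k x ⊆ N := by
    intro z hz
    have hzcube : z ∈ dyadicCube n k (hi n k z) := mem_cube_hi k z
    have hpin := index_pin hz hzcube
    exact mem_iUnion₂.2 ⟨hi n k z, hpin, hzcube⟩
  have hxclA : x ∈ closure (interior (A m k)) := drawn_subset_closure_interior hAdrawn hxA
  have hOint : (oboxAt n k x ∩ interior (A m k)).Nonempty := by
    obtain ⟨z, hz1, hz2⟩ := mem_closure_iff.1 hxclA _ (isOpen_oboxAt k x) (self_mem_oboxAt k x)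
    exact ⟨z, hz1, hz2⟩
  set V : Set (EuclideanSpace ℝ (Fin n)) := interior (A m k) ∪ oboxAt n k x with hV
  have hVconn : IsConnected V := by
    refine IsConnected.union ?_ hAconn ?_
    · obtain ⟨z, hz1, hz2⟩ := hOint
      exact ⟨z, hz2, hz1⟩
    · refine Convex.isConnected ?_ ⟨x, self_mem_oboxAt k x⟩
      intro y hy z hz a b ha hb hab i
      have h1 : (a • y + b • z) i = a * y i + b * z i := rfl
      rw [h1]
      obtain ⟨hy1, hy2⟩ := hy i
      obtain ⟨hz1, hz2⟩ := hz i
      have h2 := (convex_Ioo ((lo n k x i : ℝ) / 2 ^ k) (((hi n k x i : ℝ) + 1) / 2 ^ k))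
        (mem_Ioo.2 ⟨hy1, hy2⟩) (mem_Ioo.2 ⟨hz1, hz2⟩) ha hb hab
      rw [mem_Ioo] at h2
      simpa [smul_eq_mul] using h2
  have hVsub : V ⊆ interior B := by
    rw [hV]
    refine Set.union_subset ?_ ?_
    · exact interior_mono Set.subset_union_left
    · exact interior_maximal (fun z hz => Or.inr (hOsub hz)) (isOpen_oboxAt k x)
  have hNcl : N ⊆ closure (oboxAt n k x) := by
    intro z hz
    rw [hN] at hz
    simp only [mem_iUnion] at hz
    obtain ⟨j, hj, hzj⟩ := hz
    have hsub : dyadicCube n k j ⊆ Stmt2Aux.cbox (fun i => (lo n k x i : ℝ) / 2 ^ k)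
        (fun i => ((hi n k x i : ℝ) + 1) / 2 ^ k) := by
      intro w hw i
      obtain ⟨h1, h2⟩ := hw i
      have hji : lo n k x i ≤ j i ∧ j i ≤ hi n k x i := by
        have hll := lo_le_hi k x i
        rcases hj i with h | h <;> rw [h] <;> omega
      constructor
      · calc (lo n k x i : ℝ) / 2 ^ k ≤ (j i : ℝ) / 2 ^ k := by
              gcongr
              exact_mod_cast hji.1
          _ ≤ w i := h1
      · calc w i ≤ ((j i : ℝ) + 1) / 2 ^ k := h2
          _ ≤ ((hi n k x i : ℝ) + 1) / 2 ^ k := by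
              gcongr
              exact_mod_cast hji.2
    have hcl := cbox_subset_closure_obox (fun i => (lo n k x i : ℝ) / 2 ^ k)
      (fun i => ((hi n k x i : ℝ) + 1) / 2 ^ k)
      (fun i => lt_trans (lo_lt k x i) (lt_hi k x i))
    exact hcl (hsub hzj)
  have hintB_sub : interior B ⊆ closure V := by
    intro z hz
    rcases interior_subset hz with hzA | hzN
    · exact closure_mono Set.subset_union_left (drawn_subset_closure_interior hAdrawn hzA)
    · exact closure_mono Set.subset_union_right (hNcl hzN)
  have hBconn : IsConnected (interior B) := hVconn.subset_closure hVsub hintB_sub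
  have hBA : B ⊆ A m k := hAmax B hBdrawn hBroot hBC hBconn
  have hOS : oboxAt n k x ⊆ S := by
    intro z hz
    have hzA : z ∈ A m k := hBA (Or.inr (hOsub hz))
    exact mem_iUnion.2 ⟨m, mem_iUnion.2 ⟨hmk, hzA⟩⟩
  have hxint : x ∈ Ωsq k := by
    rw [hΩsq k]
    exact interior_maximal hOS (isOpen_oboxAt k x) (self_mem_oboxAt k x)
  have hopen : IsOpen (Ωsq k) := by rw [hΩsq k]; exact isOpen_interior
  have hmem : x ∈ Ωsq k ∩ frontier (Ωsq k) := ⟨hxint, hx⟩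
  rw [hopen.inter_frontier_eq] at hmem
  exact hmem

end
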